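/- With B(i) ⊂ GL_3(O_F) the congruence subgroup given by lower entries g₂₁ ∈ ϖ^{n₁+i}O_F, g₃₂ ∈ ϖ^{n₂+i}O_F, g₃₁ ∈ ϖ^{n₃+i}O_F and unit diagonal mod ϖ, and assuming n₃ ≥ n₁: for every upper block-unipotent n⁺ = [[1,0,u₁],[0,1,u₂],[0,0,1]] (u₁,u₂ ∈ O_F) and every n⁻ = [[1,0,0],[0,1,0],[ϖ^{n₃+i}v₁, ϖ^{n₂+i}v₂, 1]], the element n⁻ n⁺ (n⁻)^{-1} (n⁺)^{-1} lies in B(i+1)·(B(i) ∩ M), where M is the block-diagonal Levi diag(GL_2, GL_1); more precisely n⁻ n⁺ (n⁻)^{-1} factors as a product of an element of B(i) ∩ M (with (2,1) entry in ϖ^{n₃+i}O_F ⊆ ϖ^{n₁+i}O_F), the original n⁺, and an element of N_l ∩ B(i+1). -/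

import Mathlib

open Matrix

private lemma aux_unit_one_sub {O : Type} [CommRing O] [IsDomain O] [IsDiscreteValuationRing O]
    {ϖ x : O} (hϖ : Irreducible ϖ) (hx : ϖ ∣ x) : IsUnit (1 - x) := by
  rcases IsLocalRing.isUnit_or_isUnit_one_sub_self x with h | h
  · exact absurd (isUnit_of_dvd_unit hx h) hϖ.not_isUnit
  · exact h

private lemma aux_unit_one_add {O : Type} [CommRing O] [IsDomain O] [IsDiscreteValuationRing O]
    {ϖ x : O} (hϖ : Irreducible ϖ) (hx : ϖ ∣ x) : IsUnit (1 + x) := by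
  have := aux_unit_one_sub hϖ (dvd_neg.mpr hx)
  simpa [sub_neg_eq_add] using this

set_option maxHeartbeats 1600000 in
/-- With `B(i)` the congruence subgroup with lower entries divisible by
`ϖ^{n₁+i}, ϖ^{n₂+i}, ϖ^{n₃+i}` and `n₃ = max (n₁, n₂, n₃)`, for every integral upper
block-unipotent `n⁺` and every `n⁻` in the lower congruence unipotent of level `i`, the
commutator `n⁻ n⁺ (n⁻)⁻¹ (n⁺)⁻¹` lies in `B(i+1)·(B(i) ∩ M)`, where `M` is the
block-diagonal Levi `GL₂ × GL₁`: explicitly `n⁻ n⁺ (n⁻)⁻¹ (n⁺)⁻¹ = b * mm` with `mm`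
block diagonal lying in `B(i) ∩ M` and `b ∈ B(i+1)`. -/
theorem commutator_in_deeper_congruence_times_levi
    {O : Type} [CommRing O] [IsDomain O] [IsDiscreteValuationRing O]
    (ϖ : O) (hϖ : Irreducible ϖ)
    (n₁ n₂ n₃ : ℕ) (h₁ : 0 < n₁) (h₂ : 0 < n₂) (h₃ : 0 < n₃)
    (h13 : n₁ ≤ n₃) (h23 : n₂ ≤ n₃) (i : ℕ) (u₁ u₂ v₁ v₂ : O) :
    let np : Matrix (Fin 3) (Fin 3) O := !![1, 0, u₁; 0, 1, u₂; 0, 0, 1]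
    let npi : Matrix (Fin 3) (Fin 3) O := !![1, 0, -u₁; 0, 1, -u₂; 0, 0, 1]
    let nm : Matrix (Fin 3) (Fin 3) O :=
      !![1, 0, 0; 0, 1, 0; ϖ ^ (n₃ + i) * v₁, ϖ ^ (n₂ + i) * v₂, 1]
    let nmi : Matrix (Fin 3) (Fin 3) O :=
      !![1, 0, 0; 0, 1, 0; -(ϖ ^ (n₃ + i) * v₁), -(ϖ ^ (n₂ + i) * v₂), 1]
    np * npi = 1 ∧ nm * nmi = 1 ∧
    ∃ b mm : Matrix (Fin 3) (Fin 3) O,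
      -- `mm` is block diagonal and lies in `B(i) ∩ M`
      (mm 0 2 = 0 ∧ mm 1 2 = 0 ∧ mm 2 0 = 0 ∧ mm 2 1 = 0 ∧
        IsUnit (mm 0 0) ∧ IsUnit (mm 1 1) ∧ IsUnit (mm 2 2) ∧
        ϖ ^ (n₁ + i) ∣ mm 1 0) ∧
      -- `b` lies in `B(i+1)`
      (IsUnit b ∧ IsUnit (b 0 0) ∧ IsUnit (b 1 1) ∧ IsUnit (b 2 2) ∧
        ϖ ^ (n₁ + i + 1) ∣ b 1 0 ∧ ϖ ^ (n₂ + i + 1) ∣ b 2 1 ∧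
        ϖ ^ (n₃ + i + 1) ∣ b 2 0) ∧
      nm * np * nmi * npi = b * mm := by
  have hϖa : ϖ ∣ (ϖ ^ (n₃ + i) * v₁) := dvd_mul_of_dvd_left (dvd_pow_self ϖ (by omega)) v₁
  have hϖc : ϖ ∣ (ϖ ^ (n₂ + i) * v₂) := dvd_mul_of_dvd_left (dvd_pow_self ϖ (by omega)) v₂
  have hϖt : ϖ ∣ (ϖ ^ (n₃ + i) * v₁ * u₁ + ϖ ^ (n₂ + i) * v₂ * u₂) := dvd_add (hϖa.mul_right u₁) (hϖc.mul_right u₂)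
  have hu1 : IsUnit (1 - (ϖ ^ (n₃ + i) * v₁ * u₁ + ϖ ^ (n₂ + i) * v₂ * u₂)) := aux_unit_one_sub hϖ hϖt
  have hu2 : IsUnit (1 + (ϖ ^ (n₃ + i) * v₁ * u₁ + ϖ ^ (n₂ + i) * v₂ * u₂)) := aux_unit_one_add hϖ hϖt
  obtain ⟨e, he⟩ := isUnit_iff_exists_inv.mp hu1
  obtain ⟨f, hf⟩ := isUnit_iff_exists_inv.mp hu2
  have hfu : IsUnit f := IsUnit.of_mul_eq_one (a := f) (1 + (ϖ ^ (n₃ + i) * v₁ * u₁ + ϖ ^ (n₂ + i) * v₂ * u₂)) (by linear_combination hf)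
  refine ⟨?_, ?_,
    !![1, 0, u₁ * (ϖ ^ (n₃ + i) * v₁ * u₁ + ϖ ^ (n₂ + i) * v₂ * u₂) * f;
       0, 1, u₂ * (ϖ ^ (n₃ + i) * v₁ * u₁ + ϖ ^ (n₂ + i) * v₂ * u₂) * f;
       -((ϖ ^ (n₃ + i) * v₁ * u₁ + ϖ ^ (n₂ + i) * v₂ * u₂) * (ϖ ^ (n₃ + i) * v₁) * e), -((ϖ ^ (n₃ + i) * v₁ * u₁ + ϖ ^ (n₂ + i) * v₂ * u₂) * (ϖ ^ (n₂ + i) * v₂) * e), ((ϖ ^ (n₃ + i) * v₁ * u₁ + ϖ ^ (n₂ + i) * v₂ * u₂) ^ 2 + (ϖ ^ (n₃ + i) * v₁ * u₁ + ϖ ^ (n₂ + i) * v₂ * u₂) + 1) * f],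
    !![1 - u₁ * (ϖ ^ (n₃ + i) * v₁), -(u₁ * (ϖ ^ (n₂ + i) * v₂)), 0;
       -(u₂ * (ϖ ^ (n₃ + i) * v₁)), 1 - u₂ * (ϖ ^ (n₂ + i) * v₂), 0;
       0, 0, 1 + (ϖ ^ (n₃ + i) * v₁ * u₁ + ϖ ^ (n₂ + i) * v₂ * u₂)], ?_, ?_, ?_⟩
  · show !![1, 0, u₁; 0, 1, u₂; 0, 0, 1] * !![1, 0, -u₁; 0, 1, -u₂; 0, 0, 1] = 1
    norm_num [Matrix.mul_fin_three]
    exact Matrix.one_fin_three.symm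
  · show !![1, 0, 0; 0, 1, 0; ϖ ^ (n₃ + i) * v₁, ϖ ^ (n₂ + i) * v₂, 1] *
      !![1, 0, 0; 0, 1, 0; -(ϖ ^ (n₃ + i) * v₁), -(ϖ ^ (n₂ + i) * v₂), 1] = 1
    norm_num [Matrix.mul_fin_three]
    exact Matrix.one_fin_three.symm
  · refine ⟨by simp, by simp, by simp, by simp, ?_, ?_, ?_, ?_⟩
    · simpa using aux_unit_one_sub hϖ (dvd_mul_of_dvd_right hϖa u₁)
    · simpa using aux_unit_one_sub hϖ (dvd_mul_of_dvd_right hϖc u₂)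
    · simpa using hu2
    · simp only [Matrix.of_apply, Fin.isValue, Nat.succ_eq_add_one, Nat.reduceAdd,
        Matrix.cons_val', Matrix.cons_val_zero, Matrix.cons_val_one, Matrix.head_cons,
        Matrix.empty_val', Matrix.cons_val_fin_one, Matrix.head_fin_const]
      refine dvd_neg.mpr (Dvd.dvd.mul_left ?_ u₂)
      exact dvd_trans (pow_dvd_pow ϖ (by omega)) (dvd_mul_right _ v₁)
  · have hdt := hϖt
    obtain ⟨t', ht'⟩ := hdt
    refine ⟨?_, by simp, by simp, ?_, ?_, ?_, ?_⟩
    · rw [Matrix.isUnit_iff_isUnit_det, Matrix.det_fin_three]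
      refine IsUnit.of_mul_eq_one ((1 - (ϖ ^ (n₃ + i) * v₁ * u₁ + ϖ ^ (n₂ + i) * v₂ * u₂)) * (1 + (ϖ ^ (n₃ + i) * v₁ * u₁ + ϖ ^ (n₂ + i) * v₂ * u₂))) ?_
      simp only [Matrix.of_apply, Fin.isValue, Nat.succ_eq_add_one, Nat.reduceAdd,
        Matrix.cons_val', Matrix.cons_val_zero, Matrix.cons_val_one, Matrix.head_cons,
        Matrix.empty_val', Matrix.cons_val_fin_one, Matrix.head_fin_const, Matrix.cons_val_two,
        Matrix.tail_cons]
      linear_combination ((ϖ ^ (n₃ + i) * v₁ * u₁ + ϖ ^ (n₂ + i) * v₂ * u₂) ^ 3) * he +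
        (1 + (ϖ ^ (n₃ + i) * v₁ * u₁ + ϖ ^ (n₂ + i) * v₂ * u₂) ^ 3 * ((1 - (ϖ ^ (n₃ + i) * v₁ * u₁ + ϖ ^ (n₂ + i) * v₂ * u₂)) * e - 1)) * hf
    · have hx : ϖ ∣ (ϖ ^ (n₃ + i) * v₁ * u₁ + ϖ ^ (n₂ + i) * v₂ * u₂) * (ϖ ^ (n₃ + i) * v₁ * u₁ + ϖ ^ (n₂ + i) * v₂ * u₂) + (ϖ ^ (n₃ + i) * v₁ * u₁ + ϖ ^ (n₂ + i) * v₂ * u₂) := dvd_add (hϖt.mul_left _) hϖt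
      have h22 := (aux_unit_one_add hϖ hx).mul hfu
      simp only [Matrix.of_apply, Fin.isValue, Nat.succ_eq_add_one, Nat.reduceAdd,
        Matrix.cons_val', Matrix.cons_val_zero, Matrix.cons_val_one, Matrix.head_cons,
        Matrix.empty_val', Matrix.cons_val_fin_one, Matrix.head_fin_const, Matrix.cons_val_two,
        Matrix.tail_cons]
      convert h22 using 1
      ring
    · simp only [Matrix.of_apply, Fin.isValue, Nat.succ_eq_add_one, Nat.reduceAdd,
        Matrix.cons_val', Matrix.cons_val_zero, Matrix.cons_val_one, Matrix.head_cons,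
        Matrix.empty_val', Matrix.cons_val_fin_one, Matrix.head_fin_const]
      exact dvd_zero _
    · simp only [Matrix.of_apply, Fin.isValue, Nat.succ_eq_add_one, Nat.reduceAdd,
        Matrix.cons_val', Matrix.cons_val_zero, Matrix.cons_val_one, Matrix.head_cons,
        Matrix.empty_val', Matrix.cons_val_fin_one, Matrix.head_fin_const, Matrix.cons_val_two,
        Matrix.tail_cons]
      exact dvd_neg.mpr ⟨t' * v₂ * e, by rw [ht']; ring⟩
    · simp only [Matrix.of_apply, Fin.isValue, Nat.succ_eq_add_one, Nat.reduceAdd,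
        Matrix.cons_val', Matrix.cons_val_zero, Matrix.cons_val_one, Matrix.head_cons,
        Matrix.empty_val', Matrix.cons_val_fin_one, Matrix.head_fin_const, Matrix.cons_val_two,
        Matrix.tail_cons]
      exact dvd_neg.mpr ⟨t' * v₁ * e, by rw [ht']; ring⟩
  · show !![1, 0, 0; 0, 1, 0; ϖ ^ (n₃ + i) * v₁, ϖ ^ (n₂ + i) * v₂, 1] *
      !![1, 0, u₁; 0, 1, u₂; 0, 0, 1] *
      !![1, 0, 0; 0, 1, 0; -(ϖ ^ (n₃ + i) * v₁), -(ϖ ^ (n₂ + i) * v₂), 1] *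
      !![1, 0, -u₁; 0, 1, -u₂; 0, 0, 1] = _
    ext j k
    fin_cases j <;> fin_cases k <;>
      simp only [Fin.reduceFinMk, Matrix.mul_apply, Fin.sum_univ_three, Fin.mk_zero, Fin.mk_one,
        Fin.isValue, Matrix.of_apply, Nat.succ_eq_add_one, Nat.reduceAdd,
        Matrix.cons_val', Matrix.cons_val_zero, Matrix.cons_val_one, Matrix.head_cons,
        Matrix.empty_val', Matrix.cons_val_fin_one, Matrix.cons_val_two, Matrix.tail_cons,
        Matrix.head_fin_const] <;>
      (first
        | ring1
        | linear_combination (-(u₁ * (ϖ ^ (n₃ + i) * v₁ * u₁ + ϖ ^ (n₂ + i) * v₂ * u₂))) * hf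
        | linear_combination (-(u₂ * (ϖ ^ (n₃ + i) * v₁ * u₁ + ϖ ^ (n₂ + i) * v₂ * u₂))) * hf
        | linear_combination (-((ϖ ^ (n₃ + i) * v₁ * u₁ + ϖ ^ (n₂ + i) * v₂ * u₂) ^ 2 + (ϖ ^ (n₃ + i) * v₁ * u₁ + ϖ ^ (n₂ + i) * v₂ * u₂) + 1)) * hf
        | linear_combination ((ϖ ^ (n₃ + i) * v₁ * u₁ + ϖ ^ (n₂ + i) * v₂ * u₂) * (ϖ ^ (n₃ + i) * v₁)) * he
        | linear_combination ((ϖ ^ (n₃ + i) * v₁ * u₁ + ϖ ^ (n₂ + i) * v₂ * u₂) * (ϖ ^ (n₂ + i) * v₂)) * he)
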